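/- For non-negative integers k and l with l ≤ k, the difference (sum over d' from 0 to l−1 of C(k,d')·C(k+1,k−d')) − (sum over d' from 0 to l−1 of C(k+1,d')·C(k,k−d')) equals C(k,l−1)·C(k,k−l). -/

import Mathlib

/-- Binomial coefficient `C(n,r)` for integer arguments, with the convention
that it is `0` when `r < 0` (and, via `Nat.choose`, when `r > n`). -/
def ibinom (n r : ℤ) : ℕ := if 0 ≤ r then n.toNat.choose r.toNat else 0

theorem stmt_11 (k l : ℕ) (hl : l ≤ k) :
    (∑ d' ∈ Finset.range l, (k.choose d' : ℤ) * (k + 1).choose (k - d'))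
      - (∑ d' ∈ Finset.range l, ((k + 1).choose d' : ℤ) * k.choose (k - d'))
      = (ibinom k ((l : ℤ) - 1) : ℤ) * k.choose (k - l) := by
  induction l with
  | zero => simp [ibinom]
  | succ l ih =>
    have hlk : l ≤ k := Nat.le_of_succ_le hl
    rw [Finset.sum_range_succ, Finset.sum_range_succ]
    have hib : (ibinom k ((↑(l+1):ℤ) - 1) : ℤ) = k.choose l := by
      simp [ibinom]
    have hp1 : (k+1).choose (k-l) = k.choose (k-(l+1)) + k.choose (k-l) := by
      have h : k - l = (k-(l+1)) + 1 := by omega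
      rw [h, Nat.choose_succ_succ', ← h]
    rw [hib]
    cases l with
    | zero =>
      have h1 : (k+1).choose k = k + 1 := by
        have := Nat.choose_symm (n := k+1) (k := 1) (by omega)
        simpa using this
      have h2 : k.choose (k-1) = k := by
        have := Nat.choose_symm (n := k) (k := 1) hl
        simpa using this
      simp only [Finset.sum_range_zero, Nat.choose_zero_right, Nat.sub_zero, Nat.choose_self, h1, h2]
      push_cast
      ring
    | succ m =>
      have hib2 : (ibinom k ((↑(m+1):ℤ) - 1) : ℤ) = k.choose m := by
        simp [ibinom]
      rw [hib2] at ih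
      have hp2 : (k+1).choose (m+1) = k.choose m + k.choose (m+1) := by
        rw [Nat.choose_succ_succ']
      have ih' := ih (Nat.le_of_succ_le hl)
      have hcast1 : ((k+1).choose (k-(m+1)) : ℤ) = k.choose (k-(m+2)) + k.choose (k-(m+1)) := by
        exact_mod_cast congrArg (Nat.cast : ℕ → ℤ) hp1
      have hcast2 : ((k+1).choose (m+1) : ℤ) = k.choose m + k.choose (m+1) := by
        exact_mod_cast congrArg (Nat.cast : ℕ → ℤ) hp2
      rw [hcast1, hcast2]
      linarith [ih']
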